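/- Let h_n > 0 with h_n → 0 and define g_n(w) = (1/(2π)) ∫_{-π}^{π} e^{-y²/(2h_n²) - iwy} dy / √h_n for w ∈ ℝ. Then g_n(w) = (h_n^{1/2}/√(2π)) e^{-h_n² w² / 2} + O(e^{-π²/(4h_n²)}) uniformly in w ∈ ℝ, and ‖g_n‖_{L^∞} = O(h_n^{1/2}), ‖∂_w^k g_n‖_{L^∞} = O(h_n^{k + 1/2}) for every k ∈ ℕ. -/

import Mathlib

open MeasureTheory Filter

namespace Stmt16Aux

noncomputable def fI (b w y : ℝ) : ℂ :=
  Complex.exp (-(y : ℂ) ^ 2 / (2 * (b : ℂ) ^ 2) - Complex.I * w * y)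

noncomputable def fK (b : ℝ) (k : ℕ) (w y : ℝ) : ℂ := (-Complex.I * y) ^ k * fI b w y

noncomputable def GG (b : ℝ) (k : ℕ) (w : ℝ) : ℂ :=
  ∫ y in Set.Ioc (-Real.pi) Real.pi, fK b k w y

lemma norm_fI (b w y : ℝ) : ‖fI b w y‖ = Real.exp (-y ^ 2 / (2 * b ^ 2)) := by
  have h : -(y : ℂ) ^ 2 / (2 * (b : ℂ) ^ 2) - Complex.I * w * y
      = Complex.ofReal (-y ^ 2 / (2 * b ^ 2)) + Complex.ofReal (-(w * y)) * Complex.I := by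
    push_cast; ring
  rw [fI, Complex.norm_exp, h]
  rw [Complex.add_re, Complex.ofReal_re, Complex.mul_I_re, Complex.ofReal_im, neg_zero, add_zero]

lemma norm_fK (b : ℝ) (k : ℕ) (w y : ℝ) :
    ‖fK b k w y‖ = |y| ^ k * Real.exp (-y ^ 2 / (2 * b ^ 2)) := by
  rw [fK, norm_mul, norm_pow, norm_fI, norm_mul, norm_neg, Complex.norm_I, one_mul,
    Complex.norm_real, Real.norm_eq_abs]

lemma cont_fK (b : ℝ) (k : ℕ) (w : ℝ) : Continuous (fun y : ℝ => fK b k w y) := by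
  apply Continuous.mul
  · fun_prop
  · apply Complex.continuous_exp.comp
    apply Continuous.sub
    · exact (by fun_prop : Continuous fun y : ℝ => -(y : ℂ) ^ 2).div_const _
    · fun_prop

lemma integrableOn_fK (b : ℝ) (k : ℕ) (w : ℝ) :
    IntegrableOn (fun y : ℝ => fK b k w y) (Set.Ioc (-Real.pi) Real.pi) :=
  (cont_fK b k w).integrableOn_Ioc

lemma hasDerivAt_fK (b : ℝ) (k : ℕ) (y w : ℝ) :
    HasDerivAt (fun w' : ℝ => fK b k w' y) (fK b (k + 1) w y) w := by
  have h3 : HasDerivAt (fun z : ℂ => Complex.I * z * (y : ℂ)) (Complex.I * (y : ℂ)) (w : ℂ) := by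
    simpa using ((hasDerivAt_id ((w : ℂ))).const_mul Complex.I).mul_const (y : ℂ)
  have h2 : HasDerivAt (fun z : ℂ => -(y : ℂ) ^ 2 / (2 * (b : ℂ) ^ 2) - Complex.I * z * (y : ℂ))
      (-(Complex.I * (y : ℂ))) (w : ℂ) := by
    simpa using (h3.const_sub (-(y : ℂ) ^ 2 / (2 * (b : ℂ) ^ 2)))
  have h1 := (h2.cexp).const_mul ((-Complex.I * (y : ℂ)) ^ k)
  have h0 := h1.comp_ofReal
  have he : (-Complex.I * (y : ℂ)) ^ k *
      (Complex.exp (-(y : ℂ) ^ 2 / (2 * (b : ℂ) ^ 2) - Complex.I * (w : ℂ) * (y : ℂ)) *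
        -(Complex.I * (y : ℂ))) = fK b (k + 1) w y := by
    rw [fK, fI, pow_succ]; ring
  rw [he] at h0
  exact h0

lemma hasDerivAt_GG (b : ℝ) (k : ℕ) (w : ℝ) :
    HasDerivAt (GG b k) (GG b (k + 1) w) w := by
  have key := hasDerivAt_integral_of_dominated_loc_of_deriv_le
    (μ := volume.restrict (Set.Ioc (-Real.pi) Real.pi))
    (F := fun w' y => fK b k w' y) (F' := fun w' y => fK b (k + 1) w' y)
    (x₀ := w) (bound := fun _ => Real.pi ^ (k + 1))
    (Metric.ball_mem_nhds w one_pos)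
    (Eventually.of_forall fun x => (cont_fK b k x).aestronglyMeasurable.restrict)
    (integrableOn_fK b k w)
    ((cont_fK b (k + 1) w).aestronglyMeasurable.restrict)
    ?_ ?_ ?_
  · exact key.2
  · rw [ae_restrict_iff' measurableSet_Ioc]
    refine Eventually.of_forall fun y hy x _ => ?_
    rw [norm_fK]
    have hy' : |y| ≤ Real.pi := abs_le.2 ⟨by linarith [hy.1], hy.2⟩
    have hexp : Real.exp (-y ^ 2 / (2 * b ^ 2)) ≤ 1 := by
      rw [Real.exp_le_one_iff, neg_div]
      have : 0 ≤ y ^ 2 / (2 * b ^ 2) := by positivity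
      linarith
    calc |y| ^ (k + 1) * Real.exp (-y ^ 2 / (2 * b ^ 2))
        ≤ Real.pi ^ (k + 1) * 1 :=
          mul_le_mul (pow_le_pow_left₀ (abs_nonneg y) hy' _) hexp (by positivity) (by positivity)
      _ = Real.pi ^ (k + 1) := mul_one _
  · exact integrableOn_const measure_Ioc_lt_top.ne
  · exact Eventually.of_forall fun y x _ => hasDerivAt_fK b k y x

lemma iteratedDeriv_GG (b : ℝ) (c : ℂ) (k : ℕ) :
    iteratedDeriv k (fun w => c * GG b 0 w) = fun w => c * GG b k w := by
  induction k with
  | zero => simp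
  | succ k ih =>
    rw [iteratedDeriv_succ, ih]
    funext w
    exact ((hasDerivAt_GG b k w).const_mul c).deriv

noncomputable def IK (k : ℕ) : ℝ := ∫ z : ℝ, |z| ^ k * Real.exp (-z ^ 2 / 2)

lemma integrable_absk (k : ℕ) {c : ℝ} (hc : 0 < c) :
    Integrable fun z : ℝ => |z| ^ k * Real.exp (-(c * z ^ 2)) := by
  have h1 := integrable_rpow_mul_exp_neg_mul_sq hc
    (s := (k : ℝ)) (by exact_mod_cast neg_one_lt_zero.trans_le (Nat.cast_nonneg k))
  simp_rw [Real.rpow_natCast] at h1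
  have h2 := h1.abs
  refine h2.congr (Eventually.of_forall fun x => ?_)
  simp [abs_mul, abs_pow, abs_of_pos (Real.exp_pos _), neg_mul]

lemma integrable_IK (k : ℕ) : Integrable fun z : ℝ => |z| ^ k * Real.exp (-z ^ 2 / 2) := by
  have := integrable_absk k (c := (1 : ℝ) / 2) (by norm_num)
  refine this.congr (Eventually.of_forall fun x => ?_)
  ring_nf

lemma IK_nonneg (k : ℕ) : 0 ≤ IK k :=
  integral_nonneg fun x => by positivity

lemma integrable_phi {b : ℝ} (hb : 0 < b) (k : ℕ) :
    Integrable fun y : ℝ => |y| ^ k * Real.exp (-y ^ 2 / (2 * b ^ 2)) := by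
  have := integrable_absk k (c := 1 / (2 * b ^ 2)) (by positivity)
  refine this.congr (Eventually.of_forall fun x => ?_)
  congr 1
  field_simp

lemma integral_phi {b : ℝ} (hb : 0 < b) (k : ℕ) :
    ∫ y : ℝ, |y| ^ k * Real.exp (-y ^ 2 / (2 * b ^ 2)) = b ^ (k + 1) * IK k := by
  have hb' : b ≠ 0 := hb.ne'
  have key : ∀ y : ℝ, |y| ^ k * Real.exp (-y ^ 2 / (2 * b ^ 2))
      = b ^ k * (|b⁻¹ * y| ^ k * Real.exp (-(b⁻¹ * y) ^ 2 / 2)) := by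
    intro y
    have h1 : |b⁻¹ * y| ^ k = b⁻¹ ^ k * |y| ^ k := by
      rw [abs_mul, mul_pow, abs_of_pos (inv_pos.2 hb)]
    have h2 : (-(b⁻¹ * y) ^ 2 / 2 : ℝ) = -y ^ 2 / (2 * b ^ 2) := by
      field_simp
    rw [h1, h2, ← mul_assoc, ← mul_assoc, ← mul_pow, mul_inv_cancel₀ hb', one_pow, one_mul]
  simp_rw [key]
  rw [integral_const_mul, MeasureTheory.Measure.integral_comp_mul_left
    (fun z => |z| ^ k * Real.exp (-z ^ 2 / 2)) b⁻¹]
  rw [inv_inv, abs_of_pos hb, smul_eq_mul, ← IK, pow_succ]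
  ring

lemma norm_GG {b : ℝ} (hb : 0 < b) (k : ℕ) (w : ℝ) :
    ‖GG b k w‖ ≤ b ^ (k + 1) * IK k := by
  calc ‖GG b k w‖ ≤ ∫ y in Set.Ioc (-Real.pi) Real.pi, ‖fK b k w y‖ :=
        norm_integral_le_integral_norm _
    _ = ∫ y in Set.Ioc (-Real.pi) Real.pi, |y| ^ k * Real.exp (-y ^ 2 / (2 * b ^ 2)) := by
        simp_rw [norm_fK]
    _ ≤ ∫ y : ℝ, |y| ^ k * Real.exp (-y ^ 2 / (2 * b ^ 2)) :=
        setIntegral_le_integral (integrable_phi hb k)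
          (Eventually.of_forall fun y => by positivity)
    _ = b ^ (k + 1) * IK k := integral_phi hb k


lemma integrable_expquad {c : ℝ} (hc : 0 < c) :
    Integrable fun y : ℝ => Real.exp (-y ^ 2 / c) := by
  have h0 := integrable_exp_neg_mul_sq (show 0 < 1 / c by positivity)
  refine h0.congr (Eventually.of_forall fun x => ?_)
  simp only [neg_mul, neg_div, div_eq_inv_mul, one_div]
  ring_nf

lemma integrable_fI {b : ℝ} (hb : 0 < b) (w : ℝ) : Integrable (fI b w) := by
  have hcast : (1 / (2 * (b : ℂ) ^ 2)) = ((1 / (2 * b ^ 2) : ℝ) : ℂ) := by push_cast; ring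
  have hre : 0 < (1 / (2 * (b : ℂ) ^ 2)).re := by
    rw [hcast, Complex.ofReal_re]; positivity
  have h0 := integrable_cexp_quadratic hre (-(Complex.I * w)) 0
  refine h0.congr (Eventually.of_forall fun y => ?_)
  simp only [fI]
  exact congrArg Complex.exp (by ring)

lemma integral_fI {b : ℝ} (hb : 0 < b) (w : ℝ) :
    ∫ y : ℝ, fI b w y = ((Real.sqrt (2 * Real.pi) * b : ℝ) : ℂ) *
      Complex.exp (-((b ^ 2 * w ^ 2 / 2 : ℝ) : ℂ)) := by
  have hcast : (1 / (2 * (b : ℂ) ^ 2)) = ((1 / (2 * b ^ 2) : ℝ) : ℂ) := by push_cast; ring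
  have hre : (-(1 / (2 * (b : ℂ) ^ 2))).re < 0 := by
    rw [hcast, ← Complex.ofReal_neg, Complex.ofReal_re]
    have : (0:ℝ) < 1 / (2 * b ^ 2) := by positivity
    linarith
  have h0 := integral_cexp_quadratic hre (-(Complex.I * w)) 0
  have hbC : (b : ℂ) ≠ 0 := by exact_mod_cast hb.ne'
  have hl : ∀ y : ℝ, (-(1 / (2 * (b : ℂ) ^ 2))) * (y : ℂ) ^ 2 + (-(Complex.I * w)) * (y : ℂ) + 0
      = -(y : ℂ) ^ 2 / (2 * (b : ℂ) ^ 2) - Complex.I * w * y := fun y => by ring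
  simp_rw [hl] at h0
  simp only [fI]
  rw [h0]
  have e1 : ((Real.pi : ℂ) / -(-(1 / (2 * (b : ℂ) ^ 2)))) = ((2 * Real.pi * b ^ 2 : ℝ) : ℂ) := by
    rw [neg_neg]
    push_cast
    field_simp
  have e2 : (0 : ℂ) - (-(Complex.I * w)) ^ 2 / (4 * (-(1 / (2 * (b : ℂ) ^ 2))))
      = -((b ^ 2 * w ^ 2 / 2 : ℝ) : ℂ) := by
    have hI : (-(Complex.I * (w : ℂ))) ^ 2 = -(w : ℂ) ^ 2 := by
      rw [neg_pow, mul_pow, Complex.I_sq]; ring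
    rw [hI]
    push_cast
    field_simp
    ring
  have e3 : ((2 * Real.pi * b ^ 2 : ℝ) : ℂ) ^ ((1 : ℂ) / 2)
      = ((Real.sqrt (2 * Real.pi) * b : ℝ) : ℂ) := by
    rw [show ((1 : ℂ) / 2) = (((1 / 2 : ℝ)) : ℂ) by norm_num,
      ← Complex.ofReal_cpow (by positivity)]
    congr 1
    rw [← Real.sqrt_eq_rpow, Real.sqrt_mul (by positivity) (b ^ 2), Real.sqrt_sq hb.le]
  rw [e1, e2, e3]

lemma tail_bound {b : ℝ} (hb : 0 < b) (w : ℝ) :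
    ‖∫ y in (Set.Ioc (-Real.pi) Real.pi)ᶜ, fI b w y‖
      ≤ Real.exp (-Real.pi ^ 2 / (4 * b ^ 2)) * (2 * b * Real.sqrt Real.pi) := by
  have hb2 : (0:ℝ) < 2 * b ^ 2 := by positivity
  have hb4 : (0:ℝ) < 4 * b ^ 2 := by positivity
  have int1 : Integrable fun y : ℝ => Real.exp (-y ^ 2 / (2 * b ^ 2)) := integrable_expquad hb2
  have int2 : Integrable fun y : ℝ =>
      Real.exp (-Real.pi ^ 2 / (4 * b ^ 2)) * Real.exp (-y ^ 2 / (4 * b ^ 2)) :=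
    (integrable_expquad hb4).const_mul _
  calc ‖∫ y in (Set.Ioc (-Real.pi) Real.pi)ᶜ, fI b w y‖
      ≤ ∫ y in (Set.Ioc (-Real.pi) Real.pi)ᶜ, ‖fI b w y‖ := norm_integral_le_integral_norm _
    _ = ∫ y in (Set.Ioc (-Real.pi) Real.pi)ᶜ, Real.exp (-y ^ 2 / (2 * b ^ 2)) := by
        simp_rw [norm_fI]
    _ ≤ ∫ y in (Set.Ioc (-Real.pi) Real.pi)ᶜ,
          Real.exp (-Real.pi ^ 2 / (4 * b ^ 2)) * Real.exp (-y ^ 2 / (4 * b ^ 2)) := by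
        refine setIntegral_mono_on int1.integrableOn int2.integrableOn
          measurableSet_Ioc.compl fun y hy => ?_
        have hy2 : Real.pi ^ 2 ≤ y ^ 2 := by
          simp only [Set.mem_compl_iff, Set.mem_Ioc, not_and_or, not_lt, not_le] at hy
          rcases hy with h1 | h1
          · nlinarith [Real.pi_pos]
          · nlinarith [Real.pi_pos]
        rw [← Real.exp_add]
        apply Real.exp_le_exp.2
        rw [← add_div]
        rw [div_le_div_iff₀ hb2 hb4]
        nlinarith
    _ ≤ ∫ y : ℝ, Real.exp (-Real.pi ^ 2 / (4 * b ^ 2)) * Real.exp (-y ^ 2 / (4 * b ^ 2)) :=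
        setIntegral_le_integral int2 (Eventually.of_forall fun y => by positivity)
    _ = Real.exp (-Real.pi ^ 2 / (4 * b ^ 2)) * ∫ y : ℝ, Real.exp (-y ^ 2 / (4 * b ^ 2)) :=
        integral_const_mul _ _
    _ = Real.exp (-Real.pi ^ 2 / (4 * b ^ 2)) * (2 * b * Real.sqrt Real.pi) := by
        congr 1
        have hg := integral_gaussian (1 / (4 * b ^ 2))
        have : ∀ x : ℝ, Real.exp (-(1 / (4 * b ^ 2)) * x ^ 2) = Real.exp (-x ^ 2 / (4 * b ^ 2)) := by
          intro x; congr 1; field_simp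
        simp_rw [this] at hg
        rw [hg, show Real.pi / (1 / (4 * b ^ 2)) = (2 * b) ^ 2 * Real.pi by field_simp; ring,
          Real.sqrt_mul (by positivity), Real.sqrt_sq (by positivity)]

lemma part1_est {b : ℝ} (hb : 0 < b) (hb1 : b ≤ 1) (w : ℝ) :
    ‖(((1 / (2 * Real.pi) : ℝ) : ℂ) / ((Real.sqrt b : ℝ) : ℂ)) * GG b 0 w -
        ((Real.sqrt b / Real.sqrt (2 * Real.pi) : ℝ) : ℂ) *
          Complex.exp (-((b ^ 2 * w ^ 2 / 2 : ℝ) : ℂ))‖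
      ≤ Real.exp (-Real.pi ^ 2 / (4 * b ^ 2)) := by
  have pi_pos := Real.pi_pos
  have hsb : 0 < Real.sqrt b := Real.sqrt_pos.2 hb
  have hGG0 : GG b 0 w = ∫ y in Set.Ioc (-Real.pi) Real.pi, fI b w y := by
    rw [GG]; simp [fK]
  have hsplit := integral_add_compl (measurableSet_Ioc (a := -Real.pi) (b := Real.pi))
    (integrable_fI hb w)
  have hmain : (((1 / (2 * Real.pi) : ℝ) : ℂ) / ((Real.sqrt b : ℝ) : ℂ)) * (∫ y : ℝ, fI b w y)
      = ((Real.sqrt b / Real.sqrt (2 * Real.pi) : ℝ) : ℂ) *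
          Complex.exp (-((b ^ 2 * w ^ 2 / 2 : ℝ) : ℂ)) := by
    rw [integral_fI hb w, ← mul_assoc]
    congr 1
    rw [← Complex.ofReal_div, ← Complex.ofReal_mul]
    congr 1
    have h2pi : Real.sqrt (2 * Real.pi) * Real.sqrt (2 * Real.pi) = 2 * Real.pi :=
      Real.mul_self_sqrt (by positivity)
    have hbb : Real.sqrt b * Real.sqrt b = b := Real.mul_self_sqrt hb.le
    have ht : 0 < Real.sqrt (2 * Real.pi) := Real.sqrt_pos.2 (by positivity)
    set s := Real.sqrt b with hsdef
    set t := Real.sqrt (2 * Real.pi) with htdef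
    rw [show b = s * s from hbb.symm, show 2 * Real.pi = t * t from h2pi.symm]
    field_simp
  have hdiff : (((1 / (2 * Real.pi) : ℝ) : ℂ) / ((Real.sqrt b : ℝ) : ℂ)) * GG b 0 w -
        ((Real.sqrt b / Real.sqrt (2 * Real.pi) : ℝ) : ℂ) *
          Complex.exp (-((b ^ 2 * w ^ 2 / 2 : ℝ) : ℂ))
      = (((1 / (2 * Real.pi) : ℝ) : ℂ) / ((Real.sqrt b : ℝ) : ℂ)) *
          (-(∫ y in (Set.Ioc (-Real.pi) Real.pi)ᶜ, fI b w y)) := by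
    rw [← hmain, ← mul_sub]
    congr 1
    rw [hGG0, ← hsplit]
    ring
  rw [hdiff, norm_mul, norm_neg]
  have h1 : ‖(((1 / (2 * Real.pi) : ℝ) : ℂ) / ((Real.sqrt b : ℝ) : ℂ))‖
      = 1 / (2 * Real.pi) / Real.sqrt b := by
    rw [norm_div, Complex.norm_real, Complex.norm_real, Real.norm_eq_abs, Real.norm_eq_abs,
      abs_of_pos (by positivity), abs_of_pos hsb]
  rw [h1]
  have htail := tail_bound hb w
  calc 1 / (2 * Real.pi) / Real.sqrt b * ‖∫ y in (Set.Ioc (-Real.pi) Real.pi)ᶜ, fI b w y‖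
      ≤ 1 / (2 * Real.pi) / Real.sqrt b *
          (Real.exp (-Real.pi ^ 2 / (4 * b ^ 2)) * (2 * b * Real.sqrt Real.pi)) :=
        mul_le_mul_of_nonneg_left htail (by positivity)
    _ ≤ Real.exp (-Real.pi ^ 2 / (4 * b ^ 2)) := by
        have key : 1 / (2 * Real.pi) / Real.sqrt b * (2 * b * Real.sqrt Real.pi) ≤ 1 := by
          have hsb1 : Real.sqrt b ≤ 1 := by
            rw [show (1:ℝ) = Real.sqrt 1 from Real.sqrt_one.symm]
            exact Real.sqrt_le_sqrt hb1
          have hsp : 1 ≤ Real.sqrt Real.pi := by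
            rw [show (1:ℝ) = Real.sqrt 1 from Real.sqrt_one.symm]
            exact Real.sqrt_le_sqrt (by nlinarith [Real.pi_gt_three])
          have hbb : Real.sqrt b * Real.sqrt b = b := Real.mul_self_sqrt hb.le
          have hpp : Real.sqrt Real.pi * Real.sqrt Real.pi = Real.pi :=
            Real.mul_self_sqrt pi_pos.le
          have htp : 0 < Real.sqrt Real.pi := Real.sqrt_pos.2 pi_pos
          set s := Real.sqrt b with hsdef
          set t := Real.sqrt Real.pi with htdef
          rw [show b = s * s from hbb.symm, show Real.pi = t * t from hpp.symm]
          have heq : 1 / (2 * (t * t)) / s * (2 * (s * s) * t) = s / t := by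
            field_simp
          rw [heq, div_le_one htp]
          exact hsb1.trans hsp
        calc 1 / (2 * Real.pi) / Real.sqrt b *
              (Real.exp (-Real.pi ^ 2 / (4 * b ^ 2)) * (2 * b * Real.sqrt Real.pi))
            = Real.exp (-Real.pi ^ 2 / (4 * b ^ 2)) *
              (1 / (2 * Real.pi) / Real.sqrt b * (2 * b * Real.sqrt Real.pi)) := by ring
          _ ≤ Real.exp (-Real.pi ^ 2 / (4 * b ^ 2)) * 1 :=
              mul_le_mul_of_nonneg_left key (Real.exp_pos _).le
          _ = Real.exp (-Real.pi ^ 2 / (4 * b ^ 2)) := mul_one _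

end Stmt16Aux

open Stmt16Aux in
/-- Gaussian coefficient estimates: with `h_n → 0`, `h_n > 0`, and
`g_n(w) = (1/(2π)) ∫_{-π}^π e^{-y²/(2h_n²) - iwy} dy / √h_n`, one has
`g_n(w) = (√h_n/√(2π)) e^{-h_n²w²/2} + O(e^{-π²/(4h_n²)})` uniformly in `w`,
`‖g_n‖_∞ = O(√h_n)` and `‖∂_w^k g_n‖_∞ = O(h_n^{k+1/2})` for every `k`. -/
theorem stmt_16 (h : ℕ → ℝ) (hpos : ∀ n, 0 < h n)
    (hlim : Tendsto h atTop (nhds 0)) :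
    let g : ℕ → ℝ → ℂ := fun n w =>
      ((1 / (2 * Real.pi) : ℝ) : ℂ) *
        (∫ y in (-Real.pi)..Real.pi,
          Complex.exp (-(y : ℂ) ^ 2 / (2 * ((h n : ℝ) : ℂ) ^ 2) - Complex.I * w * y))
        / ((Real.sqrt (h n) : ℝ) : ℂ)
    (∃ C : ℝ, 0 < C ∧ ∃ n₀ : ℕ, ∀ n ≥ n₀, ∀ w : ℝ,
        ‖g n w - ((Real.sqrt (h n) / Real.sqrt (2 * Real.pi) : ℝ) : ℂ) *
            Complex.exp (-(((h n) ^ 2 * w ^ 2 / 2 : ℝ) : ℂ))‖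
          ≤ C * Real.exp (-Real.pi ^ 2 / (4 * (h n) ^ 2)))
    ∧ (∃ C : ℝ, 0 < C ∧ ∃ n₀ : ℕ, ∀ n ≥ n₀, ∀ w : ℝ, ‖g n w‖ ≤ C * Real.sqrt (h n))
    ∧ ∀ k : ℕ, ∃ C : ℝ, 0 < C ∧ ∃ n₀ : ℕ, ∀ n ≥ n₀, ∀ w : ℝ,
        ‖iteratedDeriv k (g n) w‖ ≤ C * (h n) ^ k * Real.sqrt (h n) := by
  intro g
  have pi_pos := Real.pi_pos
  -- rewrite g via GG
  have hg : ∀ n, g n = fun w =>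
      (((1 / (2 * Real.pi) : ℝ) : ℂ) / ((Real.sqrt (h n) : ℝ) : ℂ)) * GG (h n) 0 w := by
    intro n
    funext w
    show ((1 / (2 * Real.pi) : ℝ) : ℂ) *
        (∫ y in (-Real.pi)..Real.pi,
          Complex.exp (-(y : ℂ) ^ 2 / (2 * ((h n : ℝ) : ℂ) ^ 2) - Complex.I * w * y))
        / ((Real.sqrt (h n) : ℝ) : ℂ) = _
    rw [intervalIntegral.integral_of_le (by linarith)]
    rw [GG]
    simp only [fK, fI, pow_zero, one_mul]
    ring
  -- the derivative bound, giving parts 2 and 3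
  have main3 : ∀ k : ℕ, ∀ n : ℕ, ∀ w : ℝ,
      ‖iteratedDeriv k (g n) w‖ ≤ (IK k / (2 * Real.pi) + 1) * (h n) ^ k * Real.sqrt (h n) := by
    intro k n w
    have hb := hpos n
    have hsq : 0 < Real.sqrt (h n) := Real.sqrt_pos.2 hb
    rw [hg n, iteratedDeriv_GG]
    rw [norm_mul]
    have h1 : ‖(((1 / (2 * Real.pi) : ℝ) : ℂ) / ((Real.sqrt (h n) : ℝ) : ℂ))‖
        = (1 / (2 * Real.pi)) / Real.sqrt (h n) := by
      rw [norm_div, Complex.norm_real, Complex.norm_real, Real.norm_eq_abs, Real.norm_eq_abs,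
        abs_of_pos (by positivity), abs_of_pos hsq]
    rw [h1]
    have h2 := norm_GG hb k w
    have h3 : (1 / (2 * Real.pi)) / Real.sqrt (h n) * ((h n) ^ (k + 1) * IK k)
        = (IK k / (2 * Real.pi)) * (h n) ^ k * Real.sqrt (h n) := by
      have hsne := hsq.ne'
      have hss : h n = Real.sqrt (h n) * Real.sqrt (h n) := (Real.mul_self_sqrt hb.le).symm
      set s := Real.sqrt (h n) with hs
      rw [hss]
      field_simp
      ring
    calc (1 / (2 * Real.pi)) / Real.sqrt (h n) * ‖GG (h n) k w‖
        ≤ (1 / (2 * Real.pi)) / Real.sqrt (h n) * ((h n) ^ (k + 1) * IK k) := by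
          apply mul_le_mul_of_nonneg_left h2 (by positivity)
      _ = (IK k / (2 * Real.pi)) * (h n) ^ k * Real.sqrt (h n) := h3
      _ ≤ (IK k / (2 * Real.pi) + 1) * (h n) ^ k * Real.sqrt (h n) := by
          have : (0:ℝ) ≤ (h n) ^ k * Real.sqrt (h n) := by positivity
          nlinarith
  refine ⟨?_, ?_, ?_⟩
  · -- part 1
    have hev : ∀ᶠ n in atTop, h n < 1 := hlim (Iio_mem_nhds one_pos)
    obtain ⟨n₀, hn₀⟩ := eventually_atTop.1 hev
    refine ⟨1, one_pos, n₀, fun n hn w => ?_⟩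
    have := part1_est (hpos n) (hn₀ n hn).le w
    rw [hg n, one_mul]
    exact this
  · -- part 2
    refine ⟨IK 0 / (2 * Real.pi) + 1, by have h0 : 0 ≤ IK 0 / (2 * Real.pi) := div_nonneg (IK_nonneg 0) (by positivity); linarith, 0, fun n _ w => ?_⟩
    have := main3 0 n w
    simpa using this
  · -- part 3
    intro k
    exact ⟨IK k / (2 * Real.pi) + 1, by have h0 : 0 ≤ IK k / (2 * Real.pi) := div_nonneg (IK_nonneg k) (by positivity); linarith, 0, fun n _ w => main3 k n w⟩
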